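/- Two normal-play combinatorial games g and h are equivalent (g + x and h + x have the same outcome class for every game x) if and only if g + (−h) is a second-player win (lies in outcome class P). -/

import Mathlib

universe u

namespace SetTheory

/-- Pre-games, as in Mathlib of December 2024 (`SetTheory.PGame`, since removed from Mathlib). -/
inductive PGame : Type (u + 1)
  | mk : ∀ α β : Type u, (α → PGame) → (β → PGame) → PGame

namespace PGame

/-- The pair (`x ≤ y`, `x ⧏ y`), defined by simultaneous recursion as in old Mathlib. -/
noncomputable def leLf (x : PGame.{u}) : PGame.{u} → Prop × Prop :=
  PGame.rec (motive := fun _ => PGame.{u} → Prop × Prop)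
    (fun xl xr xL xR IHxl IHxr y =>
      PGame.rec (motive := fun _ => Prop × Prop)
        (fun yl yr yL yR IHyl IHyr =>
          ((∀ i, (IHxl i (mk yl yr yL yR)).2) ∧ ∀ j, (IHyr j).2,
           (∃ i, (IHyl i).1) ∨ ∃ j, (IHxr j (mk yl yr yL yR)).1)) y) x

instance : LE PGame.{u} := ⟨fun x y => (leLf x y).1⟩

/-- Game equivalence `x ≤ y ∧ y ≤ x`. -/
def Equiv (x y : PGame.{u}) : Prop := x ≤ y ∧ y ≤ x

instance : HasEquiv PGame.{u} := ⟨Equiv⟩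

/-- The zero game `{ | }`. -/
instance : Zero PGame.{u} := ⟨mk PEmpty PEmpty PEmpty.elim PEmpty.elim⟩

/-- Negation: swap the roles of the players. -/
noncomputable def neg (x : PGame.{u}) : PGame.{u} :=
  PGame.rec (motive := fun _ => PGame.{u})
    (fun xl xr _ _ IHl IHr => mk xr xl IHr IHl) x

noncomputable instance : Neg PGame.{u} := ⟨neg⟩

/-- Disjunctive sum of games. -/
noncomputable def add (x : PGame.{u}) : PGame.{u} → PGame.{u} :=
  PGame.rec (motive := fun _ => PGame.{u} → PGame.{u})
    (fun xl xr _ _ IHxl IHxr y =>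
      PGame.rec (motive := fun _ => PGame.{u})
        (fun yl yr yL yR IHyl IHyr =>
          mk (xl ⊕ yl) (xr ⊕ yr) (Sum.elim (fun i => IHxl i (mk yl yr yL yR)) IHyl)
            (Sum.elim (fun i => IHxr i (mk yl yr yL yR)) IHyr)) y) x

noncomputable instance : Add PGame.{u} := ⟨add⟩

end PGame

end SetTheory

open SetTheory PGame

namespace SetTheory

namespace PGame

noncomputable def LeftMoves : PGame.{u} → Type u
  | mk l _ _ _ => l

noncomputable def RightMoves : PGame.{u} → Type u
  | mk _ r _ _ => r

noncomputable def moveLeft : (x : PGame.{u}) → LeftMoves x → PGame.{u}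
  | mk _ _ L _ => L

noncomputable def moveRight : (x : PGame.{u}) → RightMoves x → PGame.{u}
  | mk _ _ _ R => R

theorem lf_iff_aux (x y : PGame.{u}) :
    ((leLf x y).2 ↔ ¬ (leLf y x).1) ∧ ((leLf y x).2 ↔ ¬ (leLf x y).1) := by
  induction x generalizing y with
  | mk xl xr xL xR IHxl IHxr =>
    induction y with
    | mk yl yr yL yR IHyl IHyr =>
      constructor
      · change ((∃ i, (leLf (mk xl xr xL xR) (yL i)).1) ∨ ∃ j, (leLf (xR j) (mk yl yr yL yR)).1) ↔
          ¬ ((∀ i, (leLf (yL i) (mk xl xr xL xR)).2) ∧ ∀ j, (leLf (mk yl yr yL yR) (xR j)).2)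
        rw [not_and_or, not_forall, not_forall]
        exact or_congr (exists_congr fun i => by rw [(IHyl i).2, not_not])
          (exists_congr fun j => by rw [(IHxr j (mk yl yr yL yR)).2, not_not])
      · change ((∃ i, (leLf (mk yl yr yL yR) (xL i)).1) ∨ ∃ j, (leLf (yR j) (mk xl xr xL xR)).1) ↔
          ¬ ((∀ i, (leLf (xL i) (mk yl yr yL yR)).2) ∧ ∀ j, (leLf (mk xl xr xL xR) (yR j)).2)
        rw [not_and_or, not_forall, not_forall]
        exact or_congr (exists_congr fun i => by rw [(IHxl i (mk yl yr yL yR)).1, not_not])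
          (exists_congr fun j => by rw [(IHyr j).1, not_not])

theorem lf_iff (x y : PGame.{u}) : (leLf x y).2 ↔ ¬ (leLf y x).1 := (lf_iff_aux x y).1

theorem mk_le_mk {xl xr : Type u} {xL : xl → PGame.{u}} {xR : xr → PGame.{u}}
    {yl yr : Type u} {yL : yl → PGame.{u}} {yR : yr → PGame.{u}} :
    mk xl xr xL xR ≤ mk yl yr yL yR ↔
      (∀ i, ¬ mk yl yr yL yR ≤ xL i) ∧ ∀ j, ¬ yR j ≤ mk xl xr xL xR := by
  show ((∀ i, (leLf (xL i) (mk yl yr yL yR)).2) ∧ ∀ j, (leLf (mk xl xr xL xR) (yR j)).2) ↔ _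
  exact and_congr (forall_congr' fun i => lf_iff (xL i) (mk yl yr yL yR))
    (forall_congr' fun j => lf_iff (mk xl xr xL xR) (yR j))

theorem le_def (x y : PGame.{u}) :
    x ≤ y ↔ (∀ i, ¬ y ≤ x.moveLeft i) ∧ ∀ j, ¬ y.moveRight j ≤ x := by
  cases x; cases y; exact mk_le_mk

theorem le_refl_aux (x : PGame.{u}) :
    x ≤ x ∧ (∀ i, ¬ x ≤ x.moveLeft i) ∧ ∀ j, ¬ x.moveRight j ≤ x := by
  induction x with
  | mk xl xr xL xR IHl IHr =>
    have hl : ∀ i, ¬ mk xl xr xL xR ≤ xL i := fun i h => ((le_def _ _).1 h).1 i (IHl i).1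
    have hr : ∀ j, ¬ xR j ≤ mk xl xr xL xR := fun j h => ((le_def _ _).1 h).2 j (IHr j).1
    exact ⟨mk_le_mk.2 ⟨hl, hr⟩, hl, hr⟩

theorem pg_le_refl (x : PGame.{u}) : x ≤ x := (le_refl_aux x).1

theorem not_le_moveLeft (x : PGame.{u}) (i : LeftMoves x) : ¬ x ≤ x.moveLeft i :=
  (le_refl_aux x).2.1 i

theorem not_moveRight_le (x : PGame.{u}) (j : RightMoves x) : ¬ x.moveRight j ≤ x :=
  (le_refl_aux x).2.2 j

theorem le_trans_aux {x y z : PGame.{u}}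
    (h₁ : ∀ i, y ≤ z → z ≤ x.moveLeft i → y ≤ x.moveLeft i)
    (h₂ : ∀ j, z.moveRight j ≤ x → x ≤ y → z.moveRight j ≤ y) (hxy : x ≤ y) (hyz : y ≤ z) :
    x ≤ z :=
  (le_def x z).2 ⟨fun i h => ((le_def x y).1 hxy).1 i (h₁ i hyz h),
    fun j h => ((le_def y z).1 hyz).2 j (h₂ j h hxy)⟩

theorem le_trans_all (x y z : PGame.{u}) :
    (x ≤ y → y ≤ z → x ≤ z) ∧ (y ≤ z → z ≤ x → y ≤ x) ∧ (z ≤ x → x ≤ y → z ≤ y) := by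
  induction x generalizing y z with
  | mk xl xr xL xR IHxl IHxr =>
    induction y generalizing z with
    | mk yl yr yL yR IHyl IHyr =>
      induction z with
      | mk zl zr zL zR IHzl IHzr =>
        exact ⟨le_trans_aux (fun i => (IHxl i (mk yl yr yL yR) (mk zl zr zL zR)).2.1)
            (fun j => (IHzr j).2.2),
          le_trans_aux (fun i => (IHyl i (mk zl zr zL zR)).2.2)
            (fun j => (IHxr j (mk yl yr yL yR) (mk zl zr zL zR)).1),
          le_trans_aux (fun i => (IHzl i).1) (fun j => (IHyr j (mk zl zr zL zR)).2.1)⟩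

theorem pg_le_trans (x y z : PGame.{u}) : x ≤ y → y ≤ z → x ≤ z := (le_trans_all x y z).1

instance pgTrans : @Trans PGame.{u} PGame.{u} PGame.{u} LE.le LE.le LE.le :=
  ⟨fun h1 h2 => pg_le_trans _ _ _ h1 h2⟩

theorem le_of_sim {xl xr : Type u} {xL : xl → PGame.{u}} {xR : xr → PGame.{u}}
    {yl yr : Type u} {yL : yl → PGame.{u}} {yR : yr → PGame.{u}}
    (hl : ∀ i, ∃ i', xL i ≤ yL i') (hr : ∀ j, ∃ j', xR j' ≤ yR j) :
    mk xl xr xL xR ≤ mk yl yr yL yR :=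
  mk_le_mk.2 ⟨fun i h => by
      obtain ⟨i', hi⟩ := hl i
      exact not_le_moveLeft (mk yl yr yL yR) i' (pg_le_trans _ _ _ h hi),
    fun j h => by
      obtain ⟨j', hj⟩ := hr j
      exact not_moveRight_le (mk xl xr xL xR) j' (pg_le_trans _ _ _ hj h)⟩

theorem neg_le_aux (x y : PGame.{u}) : (-y ≤ -x ↔ x ≤ y) ∧ (-x ≤ -y ↔ y ≤ x) := by
  induction x generalizing y with
  | mk xl xr xL xR IHxl IHxr =>
    induction y with
    | mk yl yr yL yR IHyl IHyr =>
      refine ⟨?_, ?_⟩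
      · show mk yr yl (fun j => -(yR j)) (fun i => -(yL i)) ≤
            mk xr xl (fun j => -(xR j)) (fun i => -(xL i)) ↔ mk xl xr xL xR ≤ mk yl yr yL yR
        rw [mk_le_mk, mk_le_mk]
        exact and_comm.trans (and_congr (forall_congr' fun i => not_congr (IHxl i (mk yl yr yL yR)).2)
          (forall_congr' fun j => not_congr (IHyr j).2))
      · show mk xr xl (fun j => -(xR j)) (fun i => -(xL i)) ≤
            mk yr yl (fun j => -(yR j)) (fun i => -(yL i)) ↔ mk yl yr yL yR ≤ mk xl xr xL xR
        rw [mk_le_mk, mk_le_mk]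
        exact and_comm.trans (and_congr (forall_congr' fun i => not_congr (IHyl i).1)
          (forall_congr' fun j => not_congr (IHxr j (mk yl yr yL yR)).1))

theorem pg_neg_zero : -(0 : PGame.{u}) = 0 := by
  show mk PEmpty PEmpty _ _ = mk PEmpty PEmpty _ _
  congr 1 <;> funext i <;> exact PEmpty.elim i

theorem zero_le_neg_iff {a : PGame.{u}} : 0 ≤ -a ↔ a ≤ 0 := by
  have h := (neg_le_aux a 0).1
  rw [pg_neg_zero] at h
  exact h

theorem neg_neg_le (x : PGame.{u}) : -(-x) ≤ x := by
  induction x with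
  | mk xl xr xL xR IHl IHr =>
    exact le_of_sim (fun i => ⟨i, IHl i⟩) (fun j => ⟨j, IHr j⟩)

theorem not_le_of_right_add (a b c : PGame.{u}) (j : RightMoves b)
    (h : a + b.moveRight j ≤ c) : ¬ c ≤ a + b := by
  obtain ⟨al, ar, aL, aR⟩ := a
  obtain ⟨bl, br, bL, bR⟩ := b
  exact fun H => not_moveRight_le (mk al ar aL aR + mk bl br bL bR) (Sum.inr j : ar ⊕ br)
    (pg_le_trans _ _ _ h H)

theorem not_le_of_right_add_fst (a b c : PGame.{u}) (j : RightMoves a)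
    (h : a.moveRight j + b ≤ c) : ¬ c ≤ a + b := by
  obtain ⟨al, ar, aL, aR⟩ := a
  obtain ⟨bl, br, bL, bR⟩ := b
  exact fun H => not_moveRight_le (mk al ar aL aR + mk bl br bL bR) (Sum.inl j : ar ⊕ br)
    (pg_le_trans _ _ _ h H)

theorem not_le_of_left_add (a b c : PGame.{u}) (i : LeftMoves b)
    (h : c ≤ a + b.moveLeft i) : ¬ a + b ≤ c := by
  obtain ⟨al, ar, aL, aR⟩ := a
  obtain ⟨bl, br, bL, bR⟩ := b
  exact fun H => not_le_moveLeft (mk al ar aL aR + mk bl br bL bR) (Sum.inr i : al ⊕ bl)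
    (pg_le_trans _ _ _ H h)

theorem not_le_of_left_add_fst (a b c : PGame.{u}) (i : LeftMoves a)
    (h : c ≤ a.moveLeft i + b) : ¬ a + b ≤ c := by
  obtain ⟨al, ar, aL, aR⟩ := a
  obtain ⟨bl, br, bL, bR⟩ := b
  exact fun H => not_le_moveLeft (mk al ar aL aR + mk bl br bL bR) (Sum.inl i : al ⊕ bl)
    (pg_le_trans _ _ _ H h)

theorem pg_add_zero (x : PGame.{u}) : x + 0 ≤ x ∧ x ≤ x + 0 := by
  induction x with
  | mk xl xr xL xR IHl IHr =>
    refine ⟨le_of_sim ?_ ?_, le_of_sim ?_ ?_⟩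
    · rintro (i | i)
      · exact ⟨i, (IHl i).1⟩
      · exact PEmpty.elim i
    · intro j
      exact ⟨Sum.inl j, (IHr j).1⟩
    · intro i
      exact ⟨Sum.inl i, (IHl i).2⟩
    · rintro (j | j)
      · exact ⟨j, (IHr j).2⟩
      · exact PEmpty.elim j

theorem add_comm_aux (x y : PGame.{u}) : x + y ≤ y + x := by
  induction x generalizing y with
  | mk xl xr xL xR IHxl IHxr =>
    induction y with
    | mk yl yr yL yR IHyl IHyr =>
      refine le_of_sim ?_ ?_
      · rintro (i | i)
        · exact ⟨Sum.inr i, IHxl i (mk yl yr yL yR)⟩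
        · exact ⟨Sum.inl i, IHyl i⟩
      · rintro (j | j)
        · exact ⟨Sum.inr j, IHyr j⟩
        · exact ⟨Sum.inl j, IHxr j (mk yl yr yL yR)⟩

theorem add_comm_le {x y : PGame.{u}} : x + y ≤ y + x := add_comm_aux x y

theorem add_assoc_aux (x y z : PGame.{u}) : (x + y) + z ≤ x + (y + z) ∧ x + (y + z) ≤ (x + y) + z := by
  induction x generalizing y z with
  | mk xl xr xL xR IHxl IHxr =>
    induction y generalizing z with
    | mk yl yr yL yR IHyl IHyr =>
      induction z with
      | mk zl zr zL zR IHzl IHzr =>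
        refine ⟨le_of_sim ?_ ?_, le_of_sim ?_ ?_⟩
        · rintro ((i | i) | i)
          · exact ⟨Sum.inl i, (IHxl i (mk yl yr yL yR) (mk zl zr zL zR)).1⟩
          · exact ⟨Sum.inr (Sum.inl i), (IHyl i (mk zl zr zL zR)).1⟩
          · exact ⟨Sum.inr (Sum.inr i), (IHzl i).1⟩
        · rintro (j | j | j)
          · exact ⟨Sum.inl (Sum.inl j), (IHxr j (mk yl yr yL yR) (mk zl zr zL zR)).1⟩
          · exact ⟨Sum.inl (Sum.inr j), (IHyr j (mk zl zr zL zR)).1⟩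
          · exact ⟨Sum.inr j, (IHzr j).1⟩
        · rintro (i | i | i)
          · exact ⟨Sum.inl (Sum.inl i), (IHxl i (mk yl yr yL yR) (mk zl zr zL zR)).2⟩
          · exact ⟨Sum.inl (Sum.inr i), (IHyl i (mk zl zr zL zR)).2⟩
          · exact ⟨Sum.inr i, (IHzl i).2⟩
        · rintro ((j | j) | j)
          · exact ⟨Sum.inl j, (IHxr j (mk yl yr yL yR) (mk zl zr zL zR)).2⟩
          · exact ⟨Sum.inr (Sum.inl j), (IHyr j (mk zl zr zL zR)).2⟩
          · exact ⟨Sum.inr (Sum.inr j), (IHzr j).2⟩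

theorem add_le_add_aux (x y z : PGame.{u}) :
    (y ≤ z → x + y ≤ x + z) ∧ (¬ z ≤ y → ¬ x + z ≤ x + y) := by
  induction x generalizing y z with
  | mk xl xr xL xR IHxl IHxr =>
    induction y generalizing z with
    | mk yl yr yL yR IHyl IHyr =>
      induction z with
      | mk zl zr zL zR IHzl IHzr =>
        constructor
        · intro h
          have hyz := mk_le_mk.1 h
          refine mk_le_mk.2 ⟨?_, ?_⟩
          · rintro (i | i) H
            · exact not_le_moveLeft (mk xl xr xL xR + mk zl zr zL zR) (Sum.inl i : xl ⊕ zl)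
                (pg_le_trans _ _ _ H ((IHxl i (mk yl yr yL yR) (mk zl zr zL zR)).1 h))
            · exact (IHyl i (mk zl zr zL zR)).2 (hyz.1 i) H
          · rintro (j | j) H
            · exact not_moveRight_le (mk xl xr xL xR + mk yl yr yL yR) (Sum.inl j : xr ⊕ yr)
                (pg_le_trans _ _ _ ((IHxr j (mk yl yr yL yR) (mk zl zr zL zR)).1 h) H)
            · exact (IHzr j).2 (hyz.2 j) H
        · intro h H
          rw [mk_le_mk] at h
          simp only [not_and_or, not_forall, not_not] at h
          rcases h with ⟨i, hi⟩ | ⟨j, hj⟩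
          · exact not_le_moveLeft (mk xl xr xL xR + mk zl zr zL zR) (Sum.inr i : xl ⊕ zl)
              (pg_le_trans _ _ _ H ((IHzl i).1 hi))
          · exact not_moveRight_le (mk xl xr xL xR + mk yl yr yL yR) (Sum.inr j : xr ⊕ yr)
              (pg_le_trans _ _ _ ((IHyr j (mk zl zr zL zR)).1 hj) H)

theorem add_le_add_left {y z : PGame.{u}} (h : y ≤ z) (x : PGame.{u}) : x + y ≤ x + z :=
  (add_le_add_aux x y z).1 h

theorem add_le_add_right {y z : PGame.{u}} (h : y ≤ z) (x : PGame.{u}) : y + x ≤ z + x :=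
  calc y + x ≤ x + y := add_comm_le
    _ ≤ x + z := add_le_add_left h x
    _ ≤ z + x := add_comm_le

theorem neg_add_aux (x y : PGame.{u}) : -(x + y) ≤ -x + -y := by
  induction x generalizing y with
  | mk xl xr xL xR IHxl IHxr =>
    induction y with
    | mk yl yr yL yR IHyl IHyr =>
      refine le_of_sim ?_ ?_
      · rintro (j | j)
        · exact ⟨Sum.inl j, IHxr j (mk yl yr yL yR)⟩
        · exact ⟨Sum.inr j, IHyr j⟩
      · rintro (i | i)
        · exact ⟨Sum.inl i, IHxl i (mk yl yr yL yR)⟩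
        · exact ⟨Sum.inr i, IHyl i⟩

theorem neg_add_le {x y : PGame.{u}} : -(x + y) ≤ -x + -y := neg_add_aux x y

theorem sub_self_aux (x : PGame.{u}) : x + -x ≤ 0 ∧ 0 ≤ x + -x := by
  induction x with
  | mk xl xr xL xR IHl IHr =>
    constructor
    · refine mk_le_mk.2 ⟨?_, fun j => PEmpty.elim j⟩
      rintro (i | j) H
      · exact not_le_of_right_add (xL i) (-(mk xl xr xL xR)) 0 i (IHl i).1 H
      · exact not_le_of_right_add_fst (mk xl xr xL xR) (-(xR j)) 0 j (IHr j).1 H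
    · refine mk_le_mk.2 ⟨fun i => PEmpty.elim i, ?_⟩
      rintro (j | i) H
      · exact not_le_of_left_add (xR j) (-(mk xl xr xL xR)) 0 j (IHr j).2 H
      · exact not_le_of_left_add_fst (mk xl xr xL xR) (-(xL i)) 0 i (IHl i).2 H

theorem sub_self_equiv (x : PGame.{u}) : x + -x ≈ 0 := sub_self_aux x

theorem le_iff_sub_nonneg {x y : PGame.{u}} : x ≤ y ↔ 0 ≤ y + -x := by
  constructor
  · intro h
    calc (0 : PGame.{u}) ≤ x + -x := (sub_self_aux x).2
      _ ≤ y + -x := add_le_add_right h _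
  · intro h
    calc x ≤ x + 0 := (pg_add_zero x).2
      _ ≤ x + (y + -x) := add_le_add_left h x
      _ ≤ (y + -x) + x := add_comm_le
      _ ≤ y + (-x + x) := (add_assoc_aux y (-x) x).1
      _ ≤ y + (x + -x) := add_le_add_left add_comm_le y
      _ ≤ y + 0 := add_le_add_left (sub_self_aux x).1 y
      _ ≤ y := (pg_add_zero y).1

theorem add_congr_left {g h x : PGame.{u}} (e : g ≈ h) : g + x ≈ h + x :=
  ⟨add_le_add_right e.1 x, add_le_add_right e.2 x⟩

end PGame

end SetTheory

/-- Games `g` and `h` are equivalent (same outcome class after adding any game `x`)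
iff `g + (-h)` is a second-player win, i.e. equivalent to `0`. -/
theorem equiv_iff_sub_P (g h : PGame) :
    (∀ x : PGame, ((0 : PGame) ≤ g + x ↔ (0 : PGame) ≤ h + x) ∧
      (g + x ≤ 0 ↔ h + x ≤ 0)) ↔ g + (-h) ≈ (0 : PGame) := by
  constructor
  · intro hx
    have hz : h + (-h) ≈ 0 := PGame.sub_self_equiv h
    exact ⟨((hx (-h)).2).mpr hz.1, ((hx (-h)).1).mpr hz.2⟩
  · intro hp x
    have hgh : g ≈ h := by
      refine ⟨PGame.le_iff_sub_nonneg.mpr ?_, PGame.le_iff_sub_nonneg.mpr hp.2⟩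
      have h1 : 0 ≤ -(g + -h) := PGame.zero_le_neg_iff.mpr hp.1
      calc (0 : PGame) ≤ -(g + -h) := h1
        _ ≤ -g + -(-h) := PGame.neg_add_le
        _ ≤ -g + h := PGame.add_le_add_left (PGame.neg_neg_le h) _
        _ ≤ h + -g := PGame.add_comm_le
    have hx : g + x ≈ h + x := PGame.add_congr_left hgh
    exact ⟨⟨fun h1 => pg_le_trans _ _ _ h1 hx.1, fun h1 => pg_le_trans _ _ _ h1 hx.2⟩,
      ⟨fun h1 => pg_le_trans _ _ _ hx.2 h1, fun h1 => pg_le_trans _ _ _ hx.1 h1⟩⟩
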